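/- For each sequence s = (s_0,...,s_k) define 2k vectors in ℂ^D by ψ_{2i−1} = |y^i_{s_0...s_i}⟩ and ψ_{2i} = the complex conjugate of |y^i_{s_0...s_i}⟩ (entrywise, in the standard basis), for i = 1,...,k. Then for every fixed s_0 ∈ {1,...,D_m} and every perfect matching m ∈ P₂(2k) with m ≠ e, letting L_m denote the number of indices i ∈ {1,...,k} whose pair {2i−1, 2i} lies in a non-trivial connected component of the graph on {1,...,2k} whose edges are the pairs of m together with the pairs of e (a component being trivial if it consists of a single pair {2i−1,2i} that is also a pair of m), one has ∑_{(s_1,...,s_k) ∈ {1,...,D_m}^k} ∏_{i=1}^k |∑_{x=1}^{D} ψ_{m(2i−1)}(x) · ψ_{m(2i)}(x)| · λ^i_{s_0...s_i} ≤ D^{k − ⌊L_m/2⌋}, where m(2i−1), m(2i) denote the two elements of the i-th pair of m. -/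

import Mathlib

open Matrix

/-- Perfect matchings (pair partitions) of a `2k`-element set, realized as fixed-point-free
involutions of `Fin k × Bool`, where `(i, false)` plays the role of the point `2i−1` and
`(i, true)` the role of the point `2i` of `{1, …, 2k}`. -/
abbrev Pairing (k : ℕ) :=
  {m : Equiv.Perm (Fin k × Bool) // ∀ x, m x ≠ x ∧ m (m x) = x}

/-- The identity matching `e = {1,2}{3,4}⋯{2k−1,2k}`, pairing `(i,false)` with `(i,true)`. -/
def ePairing (k : ℕ) : Pairing k :=
  ⟨Equiv.prodCongr (Equiv.refl (Fin k)) (Function.Involutive.toPerm not Bool.not_not),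
    by
      intro x
      constructor
      · intro h
        have h2 := congrArg Prod.snd h
        simp [Function.Involutive.toPerm] at h2
      · simp [Function.Involutive.toPerm, Prod.map]⟩

/-- `c(m,n)`: the number of connected components of the union graph of the matchings
`m` and `n`, i.e. the number of orbits of the subgroup generated by the two involutions. -/
noncomputable def matchingComponents {k : ℕ} (m n : Pairing k) : ℕ :=
  Nat.card (MulAction.orbitRel.Quotient
    (Subgroup.closure {(m : Equiv.Perm (Fin k × Bool)), (n : Equiv.Perm (Fin k × Bool))})
    (Fin k × Bool))



open Finset



lemma aux_mc (z : ℂ) : z * (starRingEnd ℂ) z = ((‖z‖ ^ 2 : ℝ) : ℂ) := by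
  rw [Complex.mul_conj]
  norm_cast
  simp [Complex.normSq_eq_norm_sq]

lemma aux_entry {D N : ℕ} (Y : Fin N → Fin D → ℂ) (Λ : Fin N → ℝ)
    (hc : ∑ t, (Λ t : ℂ) • Matrix.vecMulVec (Y t) (star (Y t)) = 1) (r c : Fin D) :
    ∑ t, (Λ t : ℂ) * (Y t r * (starRingEnd ℂ) (Y t c)) = if r = c then 1 else 0 := by
  have h := congrFun (congrFun hc r) c
  simpa [Matrix.sum_apply, Matrix.vecMulVec_apply, Matrix.one_apply] using h

lemma aux_sum_lam {D N : ℕ} (Y : Fin N → Fin D → ℂ) (Λ : Fin N → ℝ)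
    (hY : ∀ t, ∑ x, ‖Y t x‖ ^ 2 = 1)
    (hc : ∑ t, (Λ t : ℂ) • Matrix.vecMulVec (Y t) (star (Y t)) = 1) :
    ∑ t, Λ t = D := by
  have h1 : ∀ x : Fin D, ∑ t, Λ t * ‖Y t x‖ ^ 2 = 1 := by
    intro x
    have h := aux_entry Y Λ hc x x
    simp only [eq_self_iff_true, if_true] at h
    have h2 : ((∑ t, Λ t * ‖Y t x‖ ^ 2 : ℝ) : ℂ) = ((1:ℝ) : ℂ) := by
      push_cast
      rw [← h]
      congr 1; funext t
      rw [aux_mc]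
      push_cast
      ring
    exact_mod_cast h2
  have h3 : ∑ t, Λ t = ∑ x : Fin D, ∑ t, Λ t * ‖Y t x‖ ^ 2 := by
    rw [Finset.sum_comm]
    congr 1; funext t
    rw [← Finset.mul_sum, hY t, mul_one]
  rw [h3, Finset.sum_congr rfl (fun x _ => h1 x)]
  simp

lemma aux_cs2 {D N : ℕ} (Y : Fin N → Fin D → ℂ) (Λ : Fin N → ℝ)
    (hc : ∑ t, (Λ t : ℂ) • Matrix.vecMulVec (Y t) (star (Y t)) = 1) (u : Fin D → ℂ) :
    ∑ t, Λ t * ‖∑ x, u x * Y t x‖ ^ 2 = ∑ x, ‖u x‖ ^ 2 := by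
  have key : ((∑ t, Λ t * ‖∑ x, u x * Y t x‖ ^ 2 : ℝ) : ℂ)
      = ∑ t, (Λ t : ℂ) * ((∑ x, u x * Y t x) * (starRingEnd ℂ) (∑ x, u x * Y t x)) := by
    push_cast
    congr 1; funext t
    rw [aux_mc]
    push_cast
    ring
  have expand : ∑ t, (Λ t : ℂ) * ((∑ x, u x * Y t x) * (starRingEnd ℂ) (∑ x, u x * Y t x))
      = ∑ x, u x * (starRingEnd ℂ) (u x) := by
    have e1 : ∀ t, (Λ t : ℂ) * ((∑ x, u x * Y t x) * (starRingEnd ℂ) (∑ x, u x * Y t x))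
        = ∑ x, ∑ x', u x * (starRingEnd ℂ) (u x') * ((Λ t : ℂ) * (Y t x * (starRingEnd ℂ) (Y t x'))) := by
      intro t
      rw [map_sum, Finset.sum_mul_sum, Finset.mul_sum]
      congr 1; funext x
      rw [Finset.mul_sum]
      congr 1; funext x'
      rw [_root_.map_mul]
      ring
    rw [Finset.sum_congr rfl (fun t _ => e1 t), Finset.sum_comm]
    have e2 : ∀ x : Fin D, ∑ t, ∑ x', u x * (starRingEnd ℂ) (u x') * ((Λ t : ℂ) * (Y t x * (starRingEnd ℂ) (Y t x')))
        = u x * (starRingEnd ℂ) (u x) := by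
      intro x
      rw [Finset.sum_comm]
      have e3 : ∀ x' : Fin D, ∑ t, u x * (starRingEnd ℂ) (u x') * ((Λ t : ℂ) * (Y t x * (starRingEnd ℂ) (Y t x')))
          = u x * (starRingEnd ℂ) (u x') * (if x = x' then 1 else 0) := by
        intro x'
        rw [← Finset.mul_sum, aux_entry Y Λ hc x x']
      rw [Finset.sum_congr rfl (fun x' _ => e3 x')]
      simp
    rw [Finset.sum_congr rfl (fun x _ => e2 x)]
  have final : ((∑ t, Λ t * ‖∑ x, u x * Y t x‖ ^ 2 : ℝ) : ℂ) = ((∑ x, ‖u x‖ ^ 2 : ℝ) : ℂ) := by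
    rw [key, expand]
    push_cast
    congr 1; funext x
    rw [aux_mc]
    push_cast
    ring
  exact_mod_cast final


lemma aux_cs {N : ℕ} (Λ A B : Fin N → ℝ) (hΛ : ∀ t, 0 ≤ Λ t)
    (hA : ∀ t, 0 ≤ A t) (hB : ∀ t, 0 ≤ B t) :
    ∑ t, Λ t * (A t * B t) ≤
      Real.sqrt (∑ t, Λ t * A t ^ 2) * Real.sqrt (∑ t, Λ t * B t ^ 2) := by
  have h := Finset.sum_mul_sq_le_sq_mul_sq Finset.univ
      (fun t => Real.sqrt (Λ t) * A t) (fun t => Real.sqrt (Λ t) * B t)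
  have e1 : ∀ t : Fin N, (Real.sqrt (Λ t) * A t) * (Real.sqrt (Λ t) * B t) = Λ t * (A t * B t) := by
    intro t
    have h2 : Real.sqrt (Λ t) * Real.sqrt (Λ t) = Λ t := Real.mul_self_sqrt (hΛ t)
    calc (Real.sqrt (Λ t) * A t) * (Real.sqrt (Λ t) * B t)
        = (Real.sqrt (Λ t) * Real.sqrt (Λ t)) * (A t * B t) := by ring
      _ = Λ t * (A t * B t) := by rw [h2]
  have e2 : ∀ t : Fin N, (Real.sqrt (Λ t) * A t) ^ 2 = Λ t * A t ^ 2 := by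
    intro t
    rw [mul_pow, Real.sq_sqrt (hΛ t)]
  have e3 : ∀ t : Fin N, (Real.sqrt (Λ t) * B t) ^ 2 = Λ t * B t ^ 2 := by
    intro t
    rw [mul_pow, Real.sq_sqrt (hΛ t)]
  rw [Finset.sum_congr rfl (fun t _ => e1 t), Finset.sum_congr rfl (fun t _ => e2 t),
    Finset.sum_congr rfl (fun t _ => e3 t)] at h
  have hnn : 0 ≤ ∑ t, Λ t * (A t * B t) :=
    Finset.sum_nonneg fun t _ => mul_nonneg (hΛ t) (mul_nonneg (hA t) (hB t))
  calc ∑ t, Λ t * (A t * B t) = Real.sqrt ((∑ t, Λ t * (A t * B t)) ^ 2) := by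
        rw [Real.sqrt_sq hnn]
    _ ≤ Real.sqrt ((∑ t, Λ t * A t ^ 2) * ∑ t, Λ t * B t ^ 2) := Real.sqrt_le_sqrt h
    _ = Real.sqrt (∑ t, Λ t * A t ^ 2) * Real.sqrt (∑ t, Λ t * B t ^ 2) := by
        rw [Real.sqrt_mul (Finset.sum_nonneg fun t _ => mul_nonneg (hΛ t) (sq_nonneg _))]



/-- key of a point -/
def okey {k : ℕ} (p : Fin k × Bool) : ℕ := 2 * (p.1 : ℕ) + (if p.2 then 1 else 0)

lemma okey_inj {k : ℕ} {p q : Fin k × Bool} (h : okey p = okey q) : p = q := by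
  obtain ⟨p1, p2⟩ := p
  obtain ⟨q1, q2⟩ := q
  cases p2 <;> cases q2 <;> simp [okey] at h ⊢ <;> first
    | omega
    | exact Fin.ext (by omega)

def Tset (k Dm : ℕ) (i : ℕ) (s' : Fin k → Fin Dm) : Finset (Fin k → Fin Dm) :=
  Finset.univ.filter (fun t => ∀ j : Fin k, (j : ℕ) < i → t j = s' j)

lemma Tset_top (k Dm : ℕ) (s' : Fin k → Fin Dm) : Tset k Dm k s' = {s'} := by
  ext t
  simp only [Tset, Finset.mem_filter, Finset.mem_univ, true_and, Finset.mem_singleton]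
  constructor
  · intro h; funext j; exact h j j.isLt
  · rintro rfl; exact fun _ _ => rfl

lemma Tset_zero (k Dm : ℕ) (s' : Fin k → Fin Dm) : Tset k Dm 0 s' = Finset.univ := by
  ext t; simp [Tset]

lemma Tset_fiber (k Dm : ℕ) (i : ℕ) (hik : i < k) (s' : Fin k → Fin Dm) (v : Fin Dm) :
    (Tset k Dm i s').filter (fun t => t ⟨i, hik⟩ = v)
      = Tset k Dm (i + 1) (Function.update s' ⟨i, hik⟩ v) := by
  ext t
  simp only [Tset, Finset.mem_filter, Finset.mem_univ, true_and]
  constructor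
  · rintro ⟨h1, h2⟩ j hj
    rcases Nat.lt_or_ge (j : ℕ) i with hj' | hj'
    · rw [Function.update_apply, if_neg (by intro he; exact absurd hj' (by rw [he]; simp)), h1 j hj']
    · have : j = ⟨i, hik⟩ := Fin.ext (show (j:ℕ) = i by omega)
      rw [this, Function.update_self]
      exact h2
  · intro h
    constructor
    · intro j hj
      have := h j (by omega)
      rwa [Function.update_apply, if_neg (by intro he; exact absurd hj (by rw [he]; simp))] at this
    · have := h ⟨i, hik⟩ (by simp)
      rwa [Function.update_self] at this

lemma Tset_split {β : Type*} [AddCommMonoid β] (k Dm : ℕ) (i : ℕ) (hik : i < k)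
    (s' : Fin k → Fin Dm) (f : (Fin k → Fin Dm) → β) :
    ∑ t ∈ Tset k Dm i s', f t
      = ∑ v : Fin Dm, ∑ t ∈ Tset k Dm (i + 1) (Function.update s' ⟨i, hik⟩ v), f t := by
  rw [← Finset.sum_fiberwise_of_maps_to (g := fun t => t ⟨i, hik⟩) (t := Finset.univ)
    (fun t _ => Finset.mem_univ _) f]
  exact Finset.sum_congr rfl fun v _ => by rw [Tset_fiber k Dm i hik s' v]


section
variable (ℓ k Dm : ℕ) (y : Fin (k+1) → (Fin (k+1) → Fin Dm) → Fin (2^ℓ) → ℂ) (s₀ : Fin Dm)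

/-- the psi vectors -/
def opsi (t : Fin k → Fin Dm) (p : Fin k × Bool) : Fin (2^ℓ) → ℂ :=
  if p.2 then star (y p.1.succ (Fin.cons s₀ t)) else y p.1.succ (Fin.cons s₀ t)

variable (M : Equiv.Perm (Fin k × Bool))

/-- inner product norm for a pair -/
noncomputable def oip (t : Fin k → Fin Dm) (p : Fin k × Bool) : ℝ :=
  ‖∑ x, opsi ℓ k Dm y s₀ t p x * opsi ℓ k Dm y s₀ t (M p) x‖

lemma opsi_congr
    (hy_prefix : ∀ (i : Fin (k + 1)) (s s' : Fin (k + 1) → Fin Dm),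
      (∀ j, j ≤ i → s j = s' j) → y i s = y i s')
    (t t' : Fin k → Fin Dm) (p : Fin k × Bool) (n : ℕ) (hpn : (p.1 : ℕ) ≤ n)
    (h : ∀ j : Fin k, (j : ℕ) ≤ n → t j = t' j) :
    opsi ℓ k Dm y s₀ t p = opsi ℓ k Dm y s₀ t' p := by
  have hy : y p.1.succ (Fin.cons s₀ t) = y p.1.succ (Fin.cons s₀ t') := by
    apply hy_prefix
    intro j hj
    induction j using Fin.cases with
    | zero => simp
    | succ j' =>
      rw [Fin.cons_succ, Fin.cons_succ]
      apply h
      have := Fin.succ_le_succ_iff.mp hj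
      have := Fin.le_def.mp this
      omega
  unfold opsi
  rw [hy]

lemma lam_congr (lam : Fin (k + 1) → (Fin (k + 1) → Fin Dm) → ℝ)
    (hlam_prefix : ∀ (i : Fin (k + 1)) (s s' : Fin (k + 1) → Fin Dm),
      (∀ j, j ≤ i → s j = s' j) → lam i s = lam i s')
    (t t' : Fin k → Fin Dm) (j : Fin k) (n : ℕ) (hjn : (j : ℕ) ≤ n)
    (h : ∀ j' : Fin k, (j' : ℕ) ≤ n → t j' = t' j') :
    lam j.succ (Fin.cons s₀ t) = lam j.succ (Fin.cons s₀ t') := by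
  apply hlam_prefix
  intro j' hj'
  induction j' using Fin.cases with
  | zero => simp
  | succ j'' =>
    rw [Fin.cons_succ, Fin.cons_succ]
    apply h
    have := Fin.succ_le_succ_iff.mp hj'
    have := Fin.le_def.mp this
    omega

lemma oip_congr
    (hy_prefix : ∀ (i : Fin (k + 1)) (s s' : Fin (k + 1) → Fin Dm),
      (∀ j, j ≤ i → s j = s' j) → y i s = y i s')
    (t t' : Fin k → Fin Dm) (p : Fin k × Bool) (n : ℕ) (hpn : (p.1 : ℕ) ≤ n)
    (hmpn : ((M p).1 : ℕ) ≤ n)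
    (h : ∀ j : Fin k, (j : ℕ) ≤ n → t j = t' j) :
    oip ℓ k Dm y s₀ M t p = oip ℓ k Dm y s₀ M t' p := by
  unfold oip
  rw [opsi_congr ℓ k Dm y s₀ hy_prefix t t' p n hpn h,
    opsi_congr ℓ k Dm y s₀ hy_prefix t t' (M p) n hmpn h]

lemma oip_nonneg (t : Fin k → Fin Dm) (p : Fin k × Bool) : 0 ≤ oip ℓ k Dm y s₀ M t p :=
  norm_nonneg _

lemma opsi_norm_sq (hy_unit : ∀ i s, ∑ x, ‖y i s x‖ ^ 2 = 1) (t : Fin k → Fin Dm)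
    (p : Fin k × Bool) : ∑ x, ‖opsi ℓ k Dm y s₀ t p x‖ ^ 2 = 1 := by
  unfold opsi
  rcases p with ⟨p1, _ | _⟩
  · simpa using hy_unit p1.succ (Fin.cons s₀ t)
  · simpa using hy_unit p1.succ (Fin.cons s₀ t)

end

lemma aux_mc' (z : ℂ) : z * star z = ((‖z‖ ^ 2 : ℝ) : ℂ) := aux_mc z

section
variable (ℓ k Dm : ℕ)

lemma step_core
    (y : Fin (k+1) → (Fin (k+1) → Fin Dm) → Fin (2^ℓ) → ℂ)
    (lam : Fin (k + 1) → (Fin (k + 1) → Fin Dm) → ℝ)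
    (s₀ : Fin Dm) (M : Equiv.Perm (Fin k × Bool))
    (hM : ∀ x, M x ≠ x ∧ M (M x) = x)
    (hy_unit : ∀ i s, ∑ x, ‖y i s x‖ ^ 2 = 1)
    (hlam : ∀ i s, 0 < lam i s ∧ lam i s ≤ 1)
    (hy_prefix : ∀ (i : Fin (k + 1)) (s s' : Fin (k + 1) → Fin Dm),
      (∀ j, j ≤ i → s j = s' j) → y i s = y i s')
    (hcomplete : ∀ (i : Fin (k + 1)) (s : Fin (k + 1) → Fin Dm),
      ∑ t : Fin Dm, (lam i (Function.update s i t) : ℂ) •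
          Matrix.vecMulVec (y i (Function.update s i t)) (star (y i (Function.update s i t)))
        = (1 : Matrix (Fin (2 ^ ℓ)) (Fin (2 ^ ℓ)) ℂ))
    (i : ℕ) (hik : i < k) (s' : Fin k → Fin Dm) :
    Real.sqrt ((2:ℝ)^ℓ) ^ ((Finset.univ.filter (fun p : Fin k × Bool => okey p < okey (M p))).filter
        (fun p => ((M p).1 : ℕ) = i ∧ (M p).1 ≠ p.1)).card *
      ∑ v : Fin Dm, lam (⟨i, hik⟩ : Fin k).succ (Fin.cons s₀ (Function.update s' ⟨i, hik⟩ v)) *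
        ∏ p ∈ (Finset.univ.filter (fun p : Fin k × Bool => okey p < okey (M p))).filter
            (fun p => ((M p).1 : ℕ) = i), oip ℓ k Dm y s₀ M (Function.update s' ⟨i, hik⟩ v) p
      ≤ Real.sqrt ((2:ℝ)^ℓ) ^ 2 := by
  have hfival : ((⟨i, hik⟩ : Fin k) : ℕ) = i := rfl
  set fi : Fin k := ⟨i, hik⟩ with hfiDef
  set S : Fin (k+1) → Fin Dm := Fin.cons s₀ s' with hSDef
  set Y : Fin Dm → Fin (2^ℓ) → ℂ := fun v => y fi.succ (Function.update S fi.succ v) with hYDef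
  set Λ : Fin Dm → ℝ := fun v => lam fi.succ (Function.update S fi.succ v) with hΛDef
  have hupd : ∀ v, Fin.cons s₀ (Function.update s' fi v) = Function.update S fi.succ v := by
    intro v
    rw [hSDef]
    exact Fin.cons_update (α := fun _ : Fin (k+1) => Fin Dm) s₀ s' fi v
  have hcY : ∑ v, (Λ v : ℂ) • Matrix.vecMulVec (Y v) (star (Y v)) = 1 := hcomplete fi.succ S
  have hYunit : ∀ v, ∑ x, ‖Y v x‖ ^ 2 = 1 := fun v => hy_unit _ _
  have hΛnn : ∀ v, 0 ≤ Λ v := fun v => (hlam _ _).1.le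
  have hsum : ∑ v, Λ v = (2:ℝ)^ℓ := by
    have h := aux_sum_lam Y Λ hYunit hcY
    rw [h]; push_cast; ring
  have hlamv : ∀ v, lam fi.succ (Fin.cons s₀ (Function.update s' fi v)) = Λ v := by
    intro v; rw [hupd v]
  have hDpos : (0:ℝ) < (2:ℝ)^ℓ := by positivity
  have hSD2 : Real.sqrt ((2:ℝ)^ℓ) ^ 2 = (2:ℝ)^ℓ := Real.sq_sqrt hDpos.le
  have hSDnn : (0:ℝ) ≤ Real.sqrt ((2:ℝ)^ℓ) := Real.sqrt_nonneg _
  have hpsiF : ∀ v, opsi ℓ k Dm y s₀ (Function.update s' fi v) (fi, false) = Y v := by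
    intro v; unfold opsi; simp only [Bool.false_eq_true, if_false]
    rw [hupd v]
  have hpsiT : ∀ v, opsi ℓ k Dm y s₀ (Function.update s' fi v) (fi, true) = star (Y v) := by
    intro v; unfold opsi; simp only [if_true]
    rw [hupd v]
  have hlow : ∀ (v : Fin Dm) (p : Fin k × Bool), (p.1 : ℕ) < i →
      opsi ℓ k Dm y s₀ (Function.update s' fi v) p = opsi ℓ k Dm y s₀ s' p := by
    intro v p hp
    apply opsi_congr ℓ k Dm y s₀ hy_prefix _ _ p (p.1 : ℕ) le_rfl
    intro j hj
    rw [Function.update_apply, if_neg]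
    intro he
    rw [he] at hj
    rw [hfival] at hj
    omega
  have huunit : ∀ p, ∑ x, ‖opsi ℓ k Dm y s₀ s' p x‖ ^ 2 = 1 :=
    fun p => opsi_norm_sq ℓ k Dm y s₀ hy_unit s' p
  have hAsq : ∀ u : Fin (2^ℓ) → ℂ, ∑ v, Λ v * ‖∑ x, u x * Y v x‖ ^ 2 = ∑ x, ‖u x‖ ^ 2 :=
    fun u => aux_cs2 Y Λ hcY u
  have hCS1 : ∀ u : Fin (2^ℓ) → ℂ, (∑ x, ‖u x‖ ^ 2 = 1) →
      ∑ v, Λ v * ‖∑ x, u x * Y v x‖ ≤ Real.sqrt ((2:ℝ)^ℓ) := by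
    intro u hu
    have h := aux_cs Λ (fun v => ‖∑ x, u x * Y v x‖) (fun _ => 1) hΛnn
      (fun _ => norm_nonneg _) (fun _ => zero_le_one)
    simp only [mul_one, one_pow] at h
    rw [hAsq u, hu] at h
    simpa [hsum] using h
  have hCS2 : ∀ u w : Fin (2^ℓ) → ℂ, (∑ x, ‖u x‖ ^ 2 = 1) → (∑ x, ‖w x‖ ^ 2 = 1) →
      ∑ v, Λ v * (‖∑ x, u x * Y v x‖ * ‖∑ x, w x * Y v x‖) ≤ 1 := by
    intro u w hu hw
    have h := aux_cs Λ (fun v => ‖∑ x, u x * Y v x‖) (fun v => ‖∑ x, w x * Y v x‖) hΛnn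
      (fun _ => norm_nonneg _) (fun _ => norm_nonneg _)
    rw [hAsq u, hAsq w, hu, hw] at h
    simpa using h
  have hflip : ∀ (w : Fin (2^ℓ) → ℂ) (v : Fin Dm),
      ‖∑ x, w x * star (Y v) x‖ = ‖∑ x, star w x * Y v x‖ := by
    intro w v
    have he : (∑ x, star w x * Y v x) = star (∑ x, w x * star (Y v) x) := by
      rw [star_sum]
      refine Finset.sum_congr rfl fun x _ => ?_
      simp only [Pi.star_apply, star_mul', star_star]
    rw [he, norm_star]
  by_cases ht : M (fi, false) = (fi, true)
  · -- trivial pair at index i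
    have hchar : ∀ p : Fin k × Bool,
        (okey p < okey (M p) ∧ ((M p).1 : ℕ) = i) ↔ p = (fi, false) := by
      intro p
      constructor
      · rintro ⟨hkey, hval⟩
        have h1 : M p = (fi, (M p).2) := Prod.ext (Fin.ext (by rw [hfival]; exact hval)) rfl
        cases hb2 : (M p).2
        · rw [hb2] at h1
          exfalso
          have hpe : p = (fi, true) := by
            have h3 := (hM p).2
            rw [h1, ht] at h3
            exact h3.symm
          rw [h1] at hkey
          rw [hpe] at hkey
          simp [okey] at hkey
        · rw [hb2] at h1
          have h3 := (hM p).2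
          rw [h1] at h3
          have h4 : M (fi, true) = (fi, false) := by
            have h5 := (hM (fi, false)).2
            rw [ht] at h5
            exact h5
          rw [h4] at h3
          exact h3.symm
      · rintro rfl
        refine ⟨?_, ?_⟩
        · rw [ht]
          unfold okey
          simp
        · rw [ht]
    have hPmax : (Finset.univ.filter (fun p : Fin k × Bool => okey p < okey (M p))).filter
        (fun p => ((M p).1 : ℕ) = i) = {(fi, false)} := by
      ext p
      simp only [Finset.mem_filter, Finset.mem_univ, true_and, Finset.mem_singleton, and_assoc]
      constructor
      · rintro ⟨h1, h2⟩; exact (hchar p).mp ⟨h1, h2⟩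
      · rintro rfl; exact (hchar _).mpr rfl
    have hcset : (Finset.univ.filter (fun p : Fin k × Bool => okey p < okey (M p))).filter
        (fun p => ((M p).1 : ℕ) = i ∧ (M p).1 ≠ p.1) = ∅ := by
      ext p
      simp only [Finset.mem_filter, Finset.mem_univ, true_and, Finset.notMem_empty, iff_false,
        not_and]
      intro h1 h2 h3
      have hpe := (hchar p).mp ⟨h1, h2⟩
      rw [hpe] at h3
      rw [ht] at h3
      exact h3 rfl
    rw [hPmax, hcset]
    simp only [Finset.card_empty, pow_zero, one_mul, Finset.prod_singleton]
    have hipv : ∀ v, oip ℓ k Dm y s₀ M (Function.update s' fi v) (fi, false) = 1 := by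
      intro v
      unfold oip
      rw [ht, hpsiF v, hpsiT v]
      have he : ∑ x, Y v x * star (Y v) x = (1:ℂ) := by
        have h6 : ∀ x, Y v x * star (Y v) x = ((‖Y v x‖ ^ 2 : ℝ) : ℂ) := by
          intro x
          exact aux_mc' (Y v x)
        rw [Finset.sum_congr rfl (fun x _ => h6 x)]
        rw [← Complex.ofReal_sum]
        rw [hYunit v]
        norm_num
      calc ‖∑ x, Y v x * star (Y v) x‖ = ‖(1:ℂ)‖ := by rw [he]
        _ = 1 := norm_one
    rw [Finset.sum_congr rfl (fun v _ => by rw [hlamv v, hipv v, mul_one])]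
    rw [hsum, hSD2]
  · -- nontrivial index i
    obtain ⟨a, haDef⟩ : ∃ a, a = M (fi, false) := ⟨_, rfl⟩
    obtain ⟨b, hbDef⟩ : ∃ b, b = M (fi, true) := ⟨_, rfl⟩
    have hMa : M a = (fi, false) := by rw [haDef]; exact (hM (fi, false)).2
    have hMb : M b = (fi, true) := by rw [hbDef]; exact (hM (fi, true)).2
    have ha1 : (a.1 : ℕ) ≠ i := by
      intro h
      have h2 : a = (fi, a.2) := Prod.ext (Fin.ext (by rw [hfival]; exact h)) rfl
      cases hb2 : a.2
      · rw [hb2] at h2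
        exact (hM (fi, false)).1 (haDef.symm.trans h2)
      · rw [hb2] at h2
        exact ht (haDef.symm.trans h2)
    have hb1 : (b.1 : ℕ) ≠ i := by
      intro h
      have h2 : b = (fi, b.2) := Prod.ext (Fin.ext (by rw [hfival]; exact h)) rfl
      cases hb2 : b.2
      · rw [hb2] at h2
        rw [h2] at hMb
        exact ht hMb
      · rw [hb2] at h2
        exact (hM (fi, true)).1 (hbDef.symm.trans h2)
    have hab : a ≠ b := by
      intro h
      rw [h] at hMa
      have := hMa.symm.trans hMb
      simp at this
    have hchar : ∀ p : Fin k × Bool,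
        (okey p < okey (M p) ∧ ((M p).1 : ℕ) = i) ↔
          ((p = a ∧ (a.1 : ℕ) < i) ∨ (p = b ∧ (b.1 : ℕ) < i)) := by
      intro p
      constructor
      · rintro ⟨hkey, hval⟩
        have h1 : M p = (fi, (M p).2) := Prod.ext (Fin.ext (by rw [hfival]; exact hval)) rfl
        cases hb2 : (M p).2
        · rw [hb2] at h1
          have hp : p = a := by
            rw [haDef, ← h1]
            exact ((hM p).2).symm
          left
          refine ⟨hp, ?_⟩
          rw [h1] at hkey
          unfold okey at hkey
          rw [← hp]
          cases hp2 : p.2 <;> rw [hp2] at hkey <;> simp [hfival] at hkey <;> omega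
        · rw [hb2] at h1
          have hp : p = b := by
            rw [hbDef, ← h1]
            exact ((hM p).2).symm
          right
          refine ⟨hp, ?_⟩
          rw [h1] at hkey
          unfold okey at hkey
          have hb1' : (p.1 : ℕ) ≠ i := by rw [hp]; exact hb1
          rw [← hp]
          cases hp2 : p.2 <;> rw [hp2] at hkey <;> simp [hfival] at hkey <;> omega
      · rintro (⟨rfl, hlt⟩ | ⟨rfl, hlt⟩)
        · refine ⟨?_, ?_⟩
          · rw [hMa]
            unfold okey
            cases hb2 : p.2 <;> simp [hb2, hfival] <;> omega
          · rw [hMa, hfival]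
        · refine ⟨?_, ?_⟩
          · rw [hMb]
            unfold okey
            cases hb2 : p.2 <;> simp [hb2, hfival] <;> omega
          · rw [hMb, hfival]
    have hafi : fi ≠ a.1 := fun he => ha1 (by rw [← he])
    have hbfi : fi ≠ b.1 := fun he => hb1 (by rw [← he])
    have hipa : ∀ v, (a.1 : ℕ) < i → oip ℓ k Dm y s₀ M (Function.update s' fi v) a
        = ‖∑ x, opsi ℓ k Dm y s₀ s' a x * Y v x‖ := by
      intro v hA
      unfold oip
      rw [hMa, hpsiF v, hlow v a hA]
    have hipb : ∀ v, (b.1 : ℕ) < i → oip ℓ k Dm y s₀ M (Function.update s' fi v) b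
        = ‖∑ x, star (opsi ℓ k Dm y s₀ s' b) x * Y v x‖ := by
      intro v hB
      unfold oip
      rw [hMb, hpsiT v, hlow v b hB, hflip (opsi ℓ k Dm y s₀ s' b) v]
    have hbunit : ∑ x, ‖star (opsi ℓ k Dm y s₀ s' b) x‖ ^ 2 = 1 := by
      simpa using huunit b
    by_cases hA : (a.1 : ℕ) < i <;> by_cases hB : (b.1 : ℕ) < i
    · -- both a and b below i
      have hPmaxEq : (Finset.univ.filter (fun p : Fin k × Bool => okey p < okey (M p))).filter
          (fun p => ((M p).1 : ℕ) = i) = {a, b} := by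
        ext p
        simp only [Finset.mem_filter, Finset.mem_univ, true_and, Finset.mem_insert,
          Finset.mem_singleton]
        constructor
        · rintro ⟨h1, h2⟩
          rcases (hchar p).mp ⟨h1, h2⟩ with ⟨rfl, _⟩ | ⟨rfl, _⟩
          · exact Or.inl rfl
          · exact Or.inr rfl
        · rintro (rfl | rfl)
          · exact (hchar p).mpr (Or.inl ⟨rfl, hA⟩)
          · exact (hchar p).mpr (Or.inr ⟨rfl, hB⟩)
      have hcsetEq : (Finset.univ.filter (fun p : Fin k × Bool => okey p < okey (M p))).filter
          (fun p => ((M p).1 : ℕ) = i ∧ (M p).1 ≠ p.1) = {a, b} := by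
        ext p
        simp only [Finset.mem_filter, Finset.mem_univ, true_and, Finset.mem_insert,
          Finset.mem_singleton]
        constructor
        · rintro ⟨h1, h2, _⟩
          rcases (hchar p).mp ⟨h1, h2⟩ with ⟨rfl, _⟩ | ⟨rfl, _⟩
          · exact Or.inl rfl
          · exact Or.inr rfl
        · rintro (rfl | rfl)
          · exact ⟨((hchar p).mpr (Or.inl ⟨rfl, hA⟩)).1,
              ((hchar p).mpr (Or.inl ⟨rfl, hA⟩)).2, by rw [hMa]; exact hafi⟩
          · exact ⟨((hchar p).mpr (Or.inr ⟨rfl, hB⟩)).1,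
              ((hchar p).mpr (Or.inr ⟨rfl, hB⟩)).2, by rw [hMb]; exact hbfi⟩
      rw [hPmaxEq, hcsetEq, Finset.card_pair hab]
      rw [Finset.sum_congr rfl (fun v _ => by
        rw [hlamv v, Finset.prod_pair hab, hipa v hA, hipb v hB])]
      have hb2 := hCS2 (opsi ℓ k Dm y s₀ s' a) (star (opsi ℓ k Dm y s₀ s' b)) (huunit a) hbunit
      calc Real.sqrt ((2:ℝ)^ℓ) ^ 2 * ∑ v, Λ v * (‖∑ x, opsi ℓ k Dm y s₀ s' a x * Y v x‖ *
              ‖∑ x, star (opsi ℓ k Dm y s₀ s' b) x * Y v x‖)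
          ≤ Real.sqrt ((2:ℝ)^ℓ) ^ 2 * 1 :=
            mul_le_mul_of_nonneg_left hb2 (by positivity)
        _ = Real.sqrt ((2:ℝ)^ℓ) ^ 2 := mul_one _
    · -- only a below i
      have hPmaxEq : (Finset.univ.filter (fun p : Fin k × Bool => okey p < okey (M p))).filter
          (fun p => ((M p).1 : ℕ) = i) = {a} := by
        ext p
        simp only [Finset.mem_filter, Finset.mem_univ, true_and, Finset.mem_singleton]
        constructor
        · rintro ⟨h1, h2⟩
          rcases (hchar p).mp ⟨h1, h2⟩ with ⟨rfl, _⟩ | ⟨rfl, hlt⟩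
          · rfl
          · exact absurd hlt hB
        · rintro rfl
          exact (hchar p).mpr (Or.inl ⟨rfl, hA⟩)
      have hcsetEq : (Finset.univ.filter (fun p : Fin k × Bool => okey p < okey (M p))).filter
          (fun p => ((M p).1 : ℕ) = i ∧ (M p).1 ≠ p.1) = {a} := by
        ext p
        simp only [Finset.mem_filter, Finset.mem_univ, true_and, Finset.mem_singleton]
        constructor
        · rintro ⟨h1, h2, _⟩
          rcases (hchar p).mp ⟨h1, h2⟩ with ⟨rfl, _⟩ | ⟨rfl, hlt⟩
          · rfl
          · exact absurd hlt hB
        · rintro rfl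
          exact ⟨((hchar p).mpr (Or.inl ⟨rfl, hA⟩)).1,
            ((hchar p).mpr (Or.inl ⟨rfl, hA⟩)).2, by rw [hMa]; exact hafi⟩
      rw [hPmaxEq, hcsetEq, Finset.card_singleton]
      rw [Finset.sum_congr rfl (fun v _ => by
        rw [hlamv v, Finset.prod_singleton, hipa v hA])]
      have hb1' := hCS1 (opsi ℓ k Dm y s₀ s' a) (huunit a)
      calc Real.sqrt ((2:ℝ)^ℓ) ^ 1 * ∑ v, Λ v * ‖∑ x, opsi ℓ k Dm y s₀ s' a x * Y v x‖
          = Real.sqrt ((2:ℝ)^ℓ) * ∑ v, Λ v * ‖∑ x, opsi ℓ k Dm y s₀ s' a x * Y v x‖ := by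
            rw [pow_one]
        _ ≤ Real.sqrt ((2:ℝ)^ℓ) * Real.sqrt ((2:ℝ)^ℓ) :=
            mul_le_mul_of_nonneg_left hb1' hSDnn
        _ = Real.sqrt ((2:ℝ)^ℓ) ^ 2 := by rw [sq]
    · -- only b below i
      have hPmaxEq : (Finset.univ.filter (fun p : Fin k × Bool => okey p < okey (M p))).filter
          (fun p => ((M p).1 : ℕ) = i) = {b} := by
        ext p
        simp only [Finset.mem_filter, Finset.mem_univ, true_and, Finset.mem_singleton]
        constructor
        · rintro ⟨h1, h2⟩
          rcases (hchar p).mp ⟨h1, h2⟩ with ⟨rfl, hlt⟩ | ⟨rfl, _⟩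
          · exact absurd hlt hA
          · rfl
        · rintro rfl
          exact (hchar p).mpr (Or.inr ⟨rfl, hB⟩)
      have hcsetEq : (Finset.univ.filter (fun p : Fin k × Bool => okey p < okey (M p))).filter
          (fun p => ((M p).1 : ℕ) = i ∧ (M p).1 ≠ p.1) = {b} := by
        ext p
        simp only [Finset.mem_filter, Finset.mem_univ, true_and, Finset.mem_singleton]
        constructor
        · rintro ⟨h1, h2, _⟩
          rcases (hchar p).mp ⟨h1, h2⟩ with ⟨rfl, hlt⟩ | ⟨rfl, _⟩
          · exact absurd hlt hA
          · rfl
        · rintro rfl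
          exact ⟨((hchar p).mpr (Or.inr ⟨rfl, hB⟩)).1,
            ((hchar p).mpr (Or.inr ⟨rfl, hB⟩)).2, by rw [hMb]; exact hbfi⟩
      rw [hPmaxEq, hcsetEq, Finset.card_singleton]
      rw [Finset.sum_congr rfl (fun v _ => by
        rw [hlamv v, Finset.prod_singleton, hipb v hB])]
      have hb1' := hCS1 (star (opsi ℓ k Dm y s₀ s' b)) hbunit
      calc Real.sqrt ((2:ℝ)^ℓ) ^ 1 * ∑ v, Λ v * ‖∑ x, star (opsi ℓ k Dm y s₀ s' b) x * Y v x‖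
          = Real.sqrt ((2:ℝ)^ℓ) * ∑ v, Λ v * ‖∑ x, star (opsi ℓ k Dm y s₀ s' b) x * Y v x‖ := by
            rw [pow_one]
        _ ≤ Real.sqrt ((2:ℝ)^ℓ) * Real.sqrt ((2:ℝ)^ℓ) :=
            mul_le_mul_of_nonneg_left hb1' hSDnn
        _ = Real.sqrt ((2:ℝ)^ℓ) ^ 2 := by rw [sq]
    · -- neither below i
      have hPmaxEq : (Finset.univ.filter (fun p : Fin k × Bool => okey p < okey (M p))).filter
          (fun p => ((M p).1 : ℕ) = i) = ∅ := by
        ext p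
        simp only [Finset.mem_filter, Finset.mem_univ, true_and, Finset.notMem_empty, iff_false,
          not_and]
        intro h1 h2
        rcases (hchar p).mp ⟨h1, h2⟩ with ⟨rfl, hlt⟩ | ⟨rfl, hlt⟩
        · exact absurd hlt hA
        · exact absurd hlt hB
      have hcsetEq : (Finset.univ.filter (fun p : Fin k × Bool => okey p < okey (M p))).filter
          (fun p => ((M p).1 : ℕ) = i ∧ (M p).1 ≠ p.1) = ∅ := by
        ext p
        simp only [Finset.mem_filter, Finset.mem_univ, true_and, Finset.notMem_empty, iff_false,
          not_and]
        intro h1 h2 _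
        rcases (hchar p).mp ⟨h1, h2⟩ with ⟨rfl, hlt⟩ | ⟨rfl, hlt⟩
        · exact absurd hlt hA
        · exact absurd hlt hB
      rw [hPmaxEq, hcsetEq]
      simp only [Finset.card_empty, pow_zero, one_mul, Finset.prod_empty]
      rw [Finset.sum_congr rfl (fun v _ => by rw [hlamv v, mul_one])]
      rw [hsum, hSD2]
end

section
variable (ℓ k Dm : ℕ)

lemma hple_lemma (M : Equiv.Perm (Fin k × Bool)) (p : Fin k × Bool)
    (h : okey p < okey (M p)) : (p.1 : ℕ) ≤ ((M p).1 : ℕ) := by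
  unfold okey at h
  cases hx : p.2 <;> cases hy : (M p).2 <;> rw [hx, hy] at h <;> simp at h <;> omega

lemma main_claim
    (y : Fin (k+1) → (Fin (k+1) → Fin Dm) → Fin (2^ℓ) → ℂ)
    (lam : Fin (k + 1) → (Fin (k + 1) → Fin Dm) → ℝ)
    (s₀ : Fin Dm) (M : Equiv.Perm (Fin k × Bool))
    (hM : ∀ x, M x ≠ x ∧ M (M x) = x)
    (hy_unit : ∀ i s, ∑ x, ‖y i s x‖ ^ 2 = 1)
    (hlam : ∀ i s, 0 < lam i s ∧ lam i s ≤ 1)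
    (hy_prefix : ∀ (i : Fin (k + 1)) (s s' : Fin (k + 1) → Fin Dm),
      (∀ j, j ≤ i → s j = s' j) → y i s = y i s')
    (hlam_prefix : ∀ (i : Fin (k + 1)) (s s' : Fin (k + 1) → Fin Dm),
      (∀ j, j ≤ i → s j = s' j) → lam i s = lam i s')
    (hcomplete : ∀ (i : Fin (k + 1)) (s : Fin (k + 1) → Fin Dm),
      ∑ t : Fin Dm, (lam i (Function.update s i t) : ℂ) •
          Matrix.vecMulVec (y i (Function.update s i t)) (star (y i (Function.update s i t)))
        = (1 : Matrix (Fin (2 ^ ℓ)) (Fin (2 ^ ℓ)) ℂ)) :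
    ∀ d i, i ≤ k → k - i ≤ d → ∀ s' : Fin k → Fin Dm,
      Real.sqrt ((2:ℝ)^ℓ) ^ ((Finset.univ.filter (fun p : Fin k × Bool => okey p < okey (M p))).filter
          (fun p => i ≤ ((M p).1 : ℕ) ∧ (M p).1 ≠ p.1)).card *
        ∑ t ∈ Tset k Dm i s',
          (∏ p ∈ (Finset.univ.filter (fun p : Fin k × Bool => okey p < okey (M p))).filter
              (fun p => i ≤ ((M p).1 : ℕ)), oip ℓ k Dm y s₀ M t p) *
            ∏ j ∈ Finset.univ.filter (fun j : Fin k => i ≤ (j : ℕ)), lam j.succ (Fin.cons s₀ t)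
        ≤ Real.sqrt ((2:ℝ)^ℓ) ^ (2 * (k - i)) := by
  have hbase : ∀ s' : Fin k → Fin Dm,
      Real.sqrt ((2:ℝ)^ℓ) ^ ((Finset.univ.filter (fun p : Fin k × Bool => okey p < okey (M p))).filter
          (fun p => k ≤ ((M p).1 : ℕ) ∧ (M p).1 ≠ p.1)).card *
        ∑ t ∈ Tset k Dm k s',
          (∏ p ∈ (Finset.univ.filter (fun p : Fin k × Bool => okey p < okey (M p))).filter
              (fun p => k ≤ ((M p).1 : ℕ)), oip ℓ k Dm y s₀ M t p) *
            ∏ j ∈ Finset.univ.filter (fun j : Fin k => k ≤ (j : ℕ)), lam j.succ (Fin.cons s₀ t)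
        ≤ Real.sqrt ((2:ℝ)^ℓ) ^ (2 * (k - k)) := by
    intro s'
    have h1 : (Finset.univ.filter (fun p : Fin k × Bool => okey p < okey (M p))).filter
        (fun p => k ≤ ((M p).1 : ℕ)) = ∅ := by
      ext p
      simp only [Finset.mem_filter, Finset.mem_univ, true_and, Finset.notMem_empty, iff_false,
        not_and]
      intro _ h
      exact absurd h (not_le.mpr (M p).1.isLt)
    have h2 : (Finset.univ.filter (fun p : Fin k × Bool => okey p < okey (M p))).filter
        (fun p => k ≤ ((M p).1 : ℕ) ∧ (M p).1 ≠ p.1) = ∅ := by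
      ext p
      simp only [Finset.mem_filter, Finset.mem_univ, true_and, Finset.notMem_empty, iff_false,
        not_and]
      intro _ h
      exact absurd h (not_le.mpr (M p).1.isLt)
    have h3 : Finset.univ.filter (fun j : Fin k => k ≤ (j : ℕ)) = ∅ := by
      ext j
      simp only [Finset.mem_filter, Finset.mem_univ, true_and, Finset.notMem_empty, iff_false]
      exact not_le.mpr j.isLt
    rw [h1, h2, h3, Tset_top, Finset.sum_singleton, Nat.sub_self]
    simp
  intro d
  induction d with
  | zero =>
    intro i hik hd s'
    have : i = k := by omega
    subst this
    exact hbase s'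
  | succ d ih =>
    intro i hik hd s'
    rcases Nat.eq_or_lt_of_le hik with heq | hlt
    · subst heq
      exact hbase s'
    · -- inductive step: i < k
      have hfival : ((⟨i, hlt⟩ : Fin k) : ℕ) = i := rfl
      set P0 := Finset.univ.filter (fun p : Fin k × Bool => okey p < okey (M p)) with hP0
      -- splits
      have hPgeEq : P0.filter (fun p => i ≤ ((M p).1 : ℕ))
          = P0.filter (fun p => ((M p).1 : ℕ) = i) ∪ P0.filter (fun p => i + 1 ≤ ((M p).1 : ℕ)) := by
        ext p
        simp only [Finset.mem_filter, Finset.mem_union]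
        constructor
        · rintro ⟨h1, h2⟩
          by_cases hc : ((M p).1 : ℕ) = i
          · exact Or.inl ⟨h1, hc⟩
          · exact Or.inr ⟨h1, by omega⟩
        · rintro (⟨h1, h2⟩ | ⟨h1, h2⟩)
          · exact ⟨h1, by omega⟩
          · exact ⟨h1, by omega⟩
      have hdisjP : Disjoint (P0.filter (fun p => ((M p).1 : ℕ) = i))
          (P0.filter (fun p => i + 1 ≤ ((M p).1 : ℕ))) := by
        rw [Finset.disjoint_left]
        intro p hp hp'
        simp only [Finset.mem_filter] at hp hp'
        omega
      have hNTEq : P0.filter (fun p => i ≤ ((M p).1 : ℕ) ∧ (M p).1 ≠ p.1)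
          = P0.filter (fun p => ((M p).1 : ℕ) = i ∧ (M p).1 ≠ p.1)
            ∪ P0.filter (fun p => (i + 1 ≤ ((M p).1 : ℕ)) ∧ (M p).1 ≠ p.1) := by
        ext p
        simp only [Finset.mem_filter, Finset.mem_union]
        constructor
        · rintro ⟨h1, h2, h3⟩
          by_cases hc : ((M p).1 : ℕ) = i
          · exact Or.inl ⟨h1, hc, h3⟩
          · exact Or.inr ⟨h1, by omega, h3⟩
        · rintro (⟨h1, h2, h3⟩ | ⟨h1, h2, h3⟩)
          · exact ⟨h1, by omega, h3⟩
          · exact ⟨h1, by omega, h3⟩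
      have hdisjNT : Disjoint (P0.filter (fun p => ((M p).1 : ℕ) = i ∧ (M p).1 ≠ p.1))
          (P0.filter (fun p => (i + 1 ≤ ((M p).1 : ℕ)) ∧ (M p).1 ≠ p.1)) := by
        rw [Finset.disjoint_left]
        intro p hp hp'
        simp only [Finset.mem_filter] at hp hp'
        omega
      have hJEq : Finset.univ.filter (fun j : Fin k => i ≤ (j : ℕ))
          = insert (⟨i, hlt⟩ : Fin k) (Finset.univ.filter (fun j : Fin k => i + 1 ≤ (j : ℕ))) := by
        ext j
        simp only [Finset.mem_filter, Finset.mem_univ, true_and, Finset.mem_insert]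
        constructor
        · intro h
          by_cases hc : (j : ℕ) = i
          · exact Or.inl (Fin.ext (by rw [hc, hfival]))
          · exact Or.inr (by omega)
        · rintro (rfl | h)
          · omega
          · omega
      have hJni : (⟨i, hlt⟩ : Fin k) ∉ Finset.univ.filter (fun j : Fin k => i + 1 ≤ (j : ℕ)) := by
        simp only [Finset.mem_filter, Finset.mem_univ, true_and, hfival]
        omega
      rw [hNTEq, Finset.card_union_of_disjoint hdisjNT]
      rw [Finset.sum_congr rfl (fun t _ => by
        rw [hPgeEq, Finset.prod_union hdisjP, hJEq, Finset.prod_insert hJni])]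
      rw [Tset_split k Dm i hlt s']
      have hinner : ∀ v : Fin Dm,
          ∑ t ∈ Tset k Dm (i+1) (Function.update s' ⟨i, hlt⟩ v),
            ((∏ p ∈ P0.filter (fun p => ((M p).1 : ℕ) = i), oip ℓ k Dm y s₀ M t p) *
              ∏ p ∈ P0.filter (fun p => i + 1 ≤ ((M p).1 : ℕ)), oip ℓ k Dm y s₀ M t p) *
            (lam (⟨i, hlt⟩ : Fin k).succ (Fin.cons s₀ t) *
              ∏ j ∈ Finset.univ.filter (fun j : Fin k => i + 1 ≤ (j : ℕ)),
                lam j.succ (Fin.cons s₀ t))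
          = (lam (⟨i, hlt⟩ : Fin k).succ (Fin.cons s₀ (Function.update s' ⟨i, hlt⟩ v)) *
              ∏ p ∈ P0.filter (fun p => ((M p).1 : ℕ) = i),
                oip ℓ k Dm y s₀ M (Function.update s' ⟨i, hlt⟩ v) p) *
            ∑ t ∈ Tset k Dm (i+1) (Function.update s' ⟨i, hlt⟩ v),
              (∏ p ∈ P0.filter (fun p => i + 1 ≤ ((M p).1 : ℕ)), oip ℓ k Dm y s₀ M t p) *
              ∏ j ∈ Finset.univ.filter (fun j : Fin k => i + 1 ≤ (j : ℕ)),
                lam j.succ (Fin.cons s₀ t) := by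
        intro v
        rw [Finset.mul_sum]
        refine Finset.sum_congr rfl fun t ht => ?_
        have hagree : ∀ j : Fin k, (j : ℕ) ≤ i → t j = Function.update s' ⟨i, hlt⟩ v j := by
          simp only [Tset, Finset.mem_filter, Finset.mem_univ, true_and] at ht
          intro j hj
          exact ht j (by omega)
        have hprod : ∏ p ∈ P0.filter (fun p => ((M p).1 : ℕ) = i), oip ℓ k Dm y s₀ M t p
            = ∏ p ∈ P0.filter (fun p => ((M p).1 : ℕ) = i),
                oip ℓ k Dm y s₀ M (Function.update s' ⟨i, hlt⟩ v) p := by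
          refine Finset.prod_congr rfl fun p hp => ?_
          rw [hP0] at hp
          simp only [Finset.mem_filter, Finset.mem_univ, true_and] at hp
          obtain ⟨hp1, hp2⟩ := hp
          have hple := hple_lemma k M p hp1
          exact oip_congr ℓ k Dm y s₀ M hy_prefix t (Function.update s' ⟨i, hlt⟩ v) p i
            (by omega) (by omega) hagree
        have hlamc : lam (⟨i, hlt⟩ : Fin k).succ (Fin.cons s₀ t)
            = lam (⟨i, hlt⟩ : Fin k).succ (Fin.cons s₀ (Function.update s' ⟨i, hlt⟩ v)) := by
          apply lam_congr k Dm s₀ lam hlam_prefix t (Function.update s' ⟨i, hlt⟩ v)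
            (⟨i, hlt⟩ : Fin k) i (le_of_eq hfival) hagree
        rw [hprod, hlamc]
        ring
      rw [Finset.sum_congr rfl (fun v _ => hinner v)]
      have hAnn : ∀ v, 0 ≤ lam (⟨i, hlt⟩ : Fin k).succ (Fin.cons s₀ (Function.update s' ⟨i, hlt⟩ v)) *
          ∏ p ∈ P0.filter (fun p => ((M p).1 : ℕ) = i),
            oip ℓ k Dm y s₀ M (Function.update s' ⟨i, hlt⟩ v) p :=
        fun v => mul_nonneg (hlam _ _).1.le
          (Finset.prod_nonneg fun p _ => oip_nonneg ℓ k Dm y s₀ M _ p)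
      have hIH : ∀ v : Fin Dm,
          Real.sqrt ((2:ℝ)^ℓ) ^ (P0.filter (fun p => (i + 1 ≤ ((M p).1 : ℕ)) ∧ (M p).1 ≠ p.1)).card *
            ∑ t ∈ Tset k Dm (i+1) (Function.update s' ⟨i, hlt⟩ v),
              (∏ p ∈ P0.filter (fun p => i + 1 ≤ ((M p).1 : ℕ)), oip ℓ k Dm y s₀ M t p) *
              ∏ j ∈ Finset.univ.filter (fun j : Fin k => i + 1 ≤ (j : ℕ)),
                lam j.succ (Fin.cons s₀ t)
            ≤ Real.sqrt ((2:ℝ)^ℓ) ^ (2 * (k - (i + 1))) := by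
        intro v
        have h := ih (i + 1) (by omega) (by omega) (Function.update s' ⟨i, hlt⟩ v)
        rw [hP0]
        convert h using 2
      have hcore := step_core ℓ k Dm y lam s₀ M hM hy_unit hlam hy_prefix hcomplete i hlt s'
      rw [← hP0] at hcore
      have hSDnn : (0:ℝ) ≤ Real.sqrt ((2:ℝ)^ℓ) := Real.sqrt_nonneg _
      calc Real.sqrt ((2:ℝ)^ℓ) ^ ((P0.filter (fun p => ((M p).1 : ℕ) = i ∧ (M p).1 ≠ p.1)).card
              + (P0.filter (fun p => (i + 1 ≤ ((M p).1 : ℕ)) ∧ (M p).1 ≠ p.1)).card) *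
            ∑ v : Fin Dm,
              (lam (⟨i, hlt⟩ : Fin k).succ (Fin.cons s₀ (Function.update s' ⟨i, hlt⟩ v)) *
                ∏ p ∈ P0.filter (fun p => ((M p).1 : ℕ) = i),
                  oip ℓ k Dm y s₀ M (Function.update s' ⟨i, hlt⟩ v) p) *
              ∑ t ∈ Tset k Dm (i+1) (Function.update s' ⟨i, hlt⟩ v),
                (∏ p ∈ P0.filter (fun p => i + 1 ≤ ((M p).1 : ℕ)), oip ℓ k Dm y s₀ M t p) *
                ∏ j ∈ Finset.univ.filter (fun j : Fin k => i + 1 ≤ (j : ℕ)),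
                  lam j.succ (Fin.cons s₀ t)
          = ∑ v : Fin Dm,
              Real.sqrt ((2:ℝ)^ℓ) ^ (P0.filter (fun p => ((M p).1 : ℕ) = i ∧ (M p).1 ≠ p.1)).card *
              (lam (⟨i, hlt⟩ : Fin k).succ (Fin.cons s₀ (Function.update s' ⟨i, hlt⟩ v)) *
                ∏ p ∈ P0.filter (fun p => ((M p).1 : ℕ) = i),
                  oip ℓ k Dm y s₀ M (Function.update s' ⟨i, hlt⟩ v) p) *
              (Real.sqrt ((2:ℝ)^ℓ) ^ (P0.filter (fun p => (i + 1 ≤ ((M p).1 : ℕ)) ∧ (M p).1 ≠ p.1)).card *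
                ∑ t ∈ Tset k Dm (i+1) (Function.update s' ⟨i, hlt⟩ v),
                  (∏ p ∈ P0.filter (fun p => i + 1 ≤ ((M p).1 : ℕ)), oip ℓ k Dm y s₀ M t p) *
                  ∏ j ∈ Finset.univ.filter (fun j : Fin k => i + 1 ≤ (j : ℕ)),
                    lam j.succ (Fin.cons s₀ t)) := by
            rw [Finset.mul_sum]
            refine Finset.sum_congr rfl fun v _ => ?_
            rw [pow_add]
            ring
        _ ≤ ∑ v : Fin Dm,
              Real.sqrt ((2:ℝ)^ℓ) ^ (P0.filter (fun p => ((M p).1 : ℕ) = i ∧ (M p).1 ≠ p.1)).card *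
              (lam (⟨i, hlt⟩ : Fin k).succ (Fin.cons s₀ (Function.update s' ⟨i, hlt⟩ v)) *
                ∏ p ∈ P0.filter (fun p => ((M p).1 : ℕ) = i),
                  oip ℓ k Dm y s₀ M (Function.update s' ⟨i, hlt⟩ v) p) *
              Real.sqrt ((2:ℝ)^ℓ) ^ (2 * (k - (i + 1))) := by
            refine Finset.sum_le_sum fun v _ => ?_
            exact mul_le_mul_of_nonneg_left (hIH v)
              (mul_nonneg (pow_nonneg hSDnn _) (hAnn v))
        _ = Real.sqrt ((2:ℝ)^ℓ) ^ (2 * (k - (i + 1))) *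
              (Real.sqrt ((2:ℝ)^ℓ) ^ (P0.filter (fun p => ((M p).1 : ℕ) = i ∧ (M p).1 ≠ p.1)).card *
                ∑ v : Fin Dm,
                  lam (⟨i, hlt⟩ : Fin k).succ (Fin.cons s₀ (Function.update s' ⟨i, hlt⟩ v)) *
                  ∏ p ∈ P0.filter (fun p => ((M p).1 : ℕ) = i),
                    oip ℓ k Dm y s₀ M (Function.update s' ⟨i, hlt⟩ v) p) := by
            rw [Finset.mul_sum, Finset.mul_sum]
            refine Finset.sum_congr rfl fun v _ => ?_
            ring
        _ ≤ Real.sqrt ((2:ℝ)^ℓ) ^ (2 * (k - (i + 1))) * Real.sqrt ((2:ℝ)^ℓ) ^ 2 :=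
            mul_le_mul_of_nonneg_left hcore (pow_nonneg hSDnn _)
        _ = Real.sqrt ((2:ℝ)^ℓ) ^ (2 * (k - i)) := by
            rw [← pow_add]
            congr 1
            omega
end

lemma count_lemma (k : ℕ) (M : Equiv.Perm (Fin k × Bool))
    (hM : ∀ x, M x ≠ x ∧ M (M x) = x) :
    ((Finset.univ.filter (fun p : Fin k × Bool => okey p < okey (M p))).filter
        (fun p => (M p).1 ≠ p.1)).card
      = (Finset.univ.filter (fun i : Fin k => M (i, false) ≠ (i, true))).card := by
  set NPts := Finset.univ.filter (fun x : Fin k × Bool => (M x).1 ≠ x.1) with hNPts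
  set N := (Finset.univ.filter (fun p : Fin k × Bool => okey p < okey (M p))).filter
      (fun p => (M p).1 ≠ p.1) with hN
  set L := Finset.univ.filter (fun i : Fin k => M (i, false) ≠ (i, true)) with hL
  -- basic facts
  have hidx : ∀ i : Fin k, M (i, false) = (i, true) → ∀ b : Bool, (M (i, b)).1 = i := by
    intro i h b
    cases b
    · rw [h]
    · have h2 := (hM (i, false)).2
      rw [h] at h2
      rw [h2]
  have hidx' : ∀ x : Fin k × Bool, (M x).1 ≠ x.1 → M (x.1, false) ≠ (x.1, true) := by
    rintro ⟨x1, x2⟩ h hcon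
    exact h (hidx x1 hcon x2)
  have hpairchar : ∀ (q : Fin k × Bool) (i : Fin k), q.1 = i → q = (i, false) ∨ q = (i, true) := by
    rintro ⟨q1, q2⟩ i rfl
    cases q2
    · exact Or.inl rfl
    · exact Or.inr rfl
  -- (a) NPts.card = 2 * L.card
  have ha : NPts.card = 2 * L.card := by
    rw [Finset.card_eq_sum_card_fiberwise (f := fun x : Fin k × Bool => x.1) (t := L)
      (fun x hx => by
        rw [hNPts] at hx
        simp only [Finset.mem_coe, Finset.mem_filter, Finset.mem_univ, true_and] at hx
        rw [hL]
        simp only [Finset.mem_coe, Finset.mem_filter, Finset.mem_univ, true_and]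
        exact hidx' x hx)]
    rw [Finset.sum_congr rfl (fun i hi => ?_), Finset.sum_const, smul_eq_mul, mul_comm]
    have hLi : M (i, false) ≠ (i, true) := by
      rw [hL] at hi
      simpa using hi
    have hfib : NPts.filter (fun x => x.1 = i) = {(i, false), (i, true)} := by
      ext x
      simp only [hNPts, Finset.mem_filter, Finset.mem_univ, true_and, Finset.mem_insert,
        Finset.mem_singleton]
      constructor
      · rintro ⟨_, h2⟩
        exact hpairchar x i h2
      · rintro (rfl | rfl)
        · refine ⟨?_, rfl⟩
          intro hcon
          rcases hpairchar (M (i, false)) i hcon with h | h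
          · exact (hM (i, false)).1 h
          · exact hLi h
        · refine ⟨?_, rfl⟩
          intro hcon
          rcases hpairchar (M (i, true)) i hcon with h | h
          · have h2 := (hM (i, true)).2
            rw [h] at h2
            exact hLi h2
          · exact (hM (i, true)).1 h
    rw [hfib, Finset.card_pair (by simp)]
  -- (b) NPts.card = 2 * N.card
  have hsub1 : ∀ p, p ∈ N → p ∈ NPts := by
    intro p hp
    rw [hN] at hp
    simp only [Finset.mem_filter, Finset.mem_univ, true_and] at hp
    rw [hNPts]
    simp only [Finset.mem_filter, Finset.mem_univ, true_and]
    exact hp.2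
  have hb : NPts.card = 2 * N.card := by
    have hunion : NPts = N ∪ N.image M := by
      ext x
      simp only [hNPts, hN, Finset.mem_filter, Finset.mem_univ, true_and, Finset.mem_union,
        Finset.mem_image]
      constructor
      · intro hx
        have hne : x ≠ M x := fun h => (hM x).1 h.symm
        have hkey : okey x ≠ okey (M x) := fun h => hne (okey_inj h)
        rcases Nat.lt_or_ge (okey x) (okey (M x)) with h | h
        · exact Or.inl ⟨h, hx⟩
        · right
          refine ⟨M x, ⟨⟨?_, ?_⟩, (hM x).2⟩⟩
          · rw [(hM x).2]
            omega
          · rw [(hM x).2]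
            intro hcon
            exact hx hcon.symm
      · rintro (⟨_, h2⟩ | ⟨p, ⟨⟨hp1, hp2⟩, rfl⟩⟩)
        · exact h2
        · rw [(hM p).2]
          intro hcon
          exact hp2 hcon.symm
    have hdisj : Disjoint N (N.image M) := by
      rw [Finset.disjoint_left]
      intro x hx hx'
      rw [hN] at hx
      simp only [Finset.mem_filter, Finset.mem_univ, true_and] at hx
      rw [Finset.mem_image] at hx'
      obtain ⟨p, hp, rfl⟩ := hx'
      rw [hN] at hp
      simp only [Finset.mem_filter, Finset.mem_univ, true_and] at hp
      rw [(hM p).2] at hx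
      omega
    rw [hunion, Finset.card_union_of_disjoint hdisj,
      Finset.card_image_of_injective _ M.injective]
    omega
  omega

/-- For the adaptive measurement data `y, λ`, define for each sequence `s`
the `2k` vectors `ψ_{2i−1} = y^i_{s₀…s_i}` and `ψ_{2i} = conj(y^i_{s₀…s_i})` (here the point
`2i−1` is encoded as `(i, false)` and `2i` as `(i, true)`).  For every fixed `s₀` and every
perfect matching `m ≠ e`, with `L_m` the number of indices `i` whose pair `{2i−1, 2i}` lies
in a non-trivial connected component of the union graph of `m` and `e` (equivalently, whose
pair is not also a pair of `m`), the product over the pairs `{m(2i−1), m(2i)}` of `m`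
(each pair represented by its lower endpoint) satisfies
`∑_{s₁,…,s_k} ∏_{pairs} |∑_x ψ_{m(2i−1)}(x) ψ_{m(2i)}(x)| · ∏_i λ^i_{s₀…s_i}
  ≤ D^{k − ⌊L_m/2⌋}`. -/
theorem orthogonal_loop_decomposition_bound
    (ℓ k Dm : ℕ) (hℓ : 1 ≤ ℓ) (hk : 1 ≤ k) (hDm : 1 ≤ Dm)
    (y : Fin (k + 1) → (Fin (k + 1) → Fin Dm) → (Fin (2 ^ ℓ) → ℂ))
    (lam : Fin (k + 1) → (Fin (k + 1) → Fin Dm) → ℝ)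
    (hy_unit : ∀ i s, ∑ x, ‖y i s x‖ ^ 2 = 1)
    (hlam : ∀ i s, 0 < lam i s ∧ lam i s ≤ 1)
    (hy_prefix : ∀ (i : Fin (k + 1)) (s s' : Fin (k + 1) → Fin Dm),
      (∀ j, j ≤ i → s j = s' j) → y i s = y i s')
    (hlam_prefix : ∀ (i : Fin (k + 1)) (s s' : Fin (k + 1) → Fin Dm),
      (∀ j, j ≤ i → s j = s' j) → lam i s = lam i s')
    (hcomplete : ∀ (i : Fin (k + 1)) (s : Fin (k + 1) → Fin Dm),
      ∑ t : Fin Dm, (lam i (Function.update s i t) : ℂ) •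
          Matrix.vecMulVec (y i (Function.update s i t)) (star (y i (Function.update s i t)))
        = (1 : Matrix (Fin (2 ^ ℓ)) (Fin (2 ^ ℓ)) ℂ)) :
    ∀ (s₀ : Fin Dm) (m : Pairing k), m ≠ ePairing k →
      ∑ s' : Fin k → Fin Dm,
        (let s : Fin (k + 1) → Fin Dm := Fin.cons s₀ s'
         let ψ : Fin k × Bool → (Fin (2 ^ ℓ) → ℂ) :=
           fun p => if p.2 then star (y p.1.succ s) else y p.1.succ s
         (∏ p ∈ Finset.univ.filter
              (fun p : Fin k × Bool =>
                (2 * (p.1 : ℕ) + (if p.2 then 1 else 0)) <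
                  (2 * (((m : Equiv.Perm (Fin k × Bool)) p).1 : ℕ) +
                    (if ((m : Equiv.Perm (Fin k × Bool)) p).2 then 1 else 0))),
            ‖∑ x, ψ p x * ψ ((m : Equiv.Perm (Fin k × Bool)) p) x‖) *
          ∏ i : Fin k, lam i.succ s)
        ≤ ((2 : ℝ) ^ ℓ) ^
            (k - (Finset.univ.filter
              (fun i : Fin k =>
                (m : Equiv.Perm (Fin k × Bool)) (i, false) ≠ (i, true))).card / 2) := by
  intro s₀ m _hm
  set M : Equiv.Perm (Fin k × Bool) := (m : Equiv.Perm (Fin k × Bool)) with hMdef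
  have hM : ∀ x, M x ≠ x ∧ M (M x) = x := m.2
  show (∑ s' : Fin k → Fin Dm,
      (∏ p ∈ Finset.univ.filter (fun p : Fin k × Bool => okey p < okey (M p)),
        oip ℓ k Dm y s₀ M s' p) * ∏ i : Fin k, lam i.succ (Fin.cons s₀ s'))
    ≤ ((2 : ℝ) ^ ℓ) ^
        (k - (Finset.univ.filter (fun i : Fin k => M (i, false) ≠ (i, true))).card / 2)
  have hmc := main_claim ℓ k Dm y lam s₀ M hM hy_unit hlam hy_prefix hlam_prefix hcomplete
    k 0 (by omega) (by omega) (fun _ => ⟨0, hDm⟩)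
  rw [Tset_zero] at hmc
  have e1 : (Finset.univ.filter (fun p : Fin k × Bool => okey p < okey (M p))).filter
      (fun p => 0 ≤ ((M p).1 : ℕ)) = Finset.univ.filter (fun p : Fin k × Bool => okey p < okey (M p)) := by
    ext p; simp
  have e2 : (Finset.univ.filter (fun p : Fin k × Bool => okey p < okey (M p))).filter
      (fun p => 0 ≤ ((M p).1 : ℕ) ∧ (M p).1 ≠ p.1)
      = (Finset.univ.filter (fun p : Fin k × Bool => okey p < okey (M p))).filter
        (fun p => (M p).1 ≠ p.1) := by
    ext p; simp
  have e3 : Finset.univ.filter (fun j : Fin k => 0 ≤ (j : ℕ)) = Finset.univ := by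
    ext j; simp
  rw [e1, e2, e3, Nat.sub_zero, count_lemma k M hM] at hmc
  set L := (Finset.univ.filter (fun i : Fin k => M (i, false) ≠ (i, true))).card with hLdef
  have hDpos : (0:ℝ) < (2:ℝ)^ℓ := by positivity
  have hSD2 : Real.sqrt ((2:ℝ)^ℓ) ^ 2 = (2:ℝ)^ℓ := Real.sq_sqrt hDpos.le
  have h1D : (1:ℝ) ≤ (2:ℝ)^ℓ := one_le_pow₀ (by norm_num)
  have h1SD : (1:ℝ) ≤ Real.sqrt ((2:ℝ)^ℓ) := by
    rw [show (1:ℝ) = Real.sqrt 1 by simp]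
    exact Real.sqrt_le_sqrt h1D
  have hLk : L ≤ k := by
    rw [hLdef]
    calc (Finset.univ.filter (fun i : Fin k => M (i, false) ≠ (i, true))).card
        ≤ Finset.univ.card := Finset.card_filter_le _ _
      _ = k := by simp
  have key2 : Real.sqrt ((2:ℝ)^ℓ) ^ (2 * k)
      ≤ Real.sqrt ((2:ℝ)^ℓ) ^ L * ((2:ℝ)^ℓ) ^ (k - L / 2) := by
    rw [show ((2:ℝ)^ℓ) ^ (k - L / 2) = Real.sqrt ((2:ℝ)^ℓ) ^ (2 * (k - L / 2)) from by
      rw [pow_mul, hSD2], ← pow_add]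
    apply pow_le_pow_right₀ h1SD
    omega
  have hpos : (0:ℝ) < Real.sqrt ((2:ℝ)^ℓ) ^ L :=
    pow_pos (Real.sqrt_pos.mpr hDpos) L
  exact le_of_mul_le_mul_left (le_trans hmc key2) hpos
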